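/- For every pair of integers n, j with n ≥ 3 and 1 ≤ j ≤ n−2, and with N = C(n,2), one has (e^{−2}/(2·√(n(n−1))))·(n^{1−j/n}·κ(j/n))^n ≤ C(N, n−j) ≤ (n^{1−j/n}·κ(j/n))^n. -/

import Mathlib

noncomputable def kappa (x : ℝ) : ℝ := (Real.exp 1 / 2) ^ (1 - x) * (1 - x) ^ (-(1 - x))

lemma kappa_pow_eq (n k j : ℕ) (hn : 0 < n) (hk : 0 < k) (hkj : (k:ℝ) = (n:ℝ) - j) :
    ((n : ℝ) ^ (1 - (j : ℝ) / n) * kappa ((j : ℝ) / n)) ^ n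
      = (Real.exp 1 * (n:ℝ)^2 / (2*k)) ^ k := by
  have hn0 : (0:ℝ) < n := by exact_mod_cast hn
  have hk0 : (0:ℝ) < k := by exact_mod_cast hk
  have ht : 1 - (j:ℝ)/n = (k:ℝ)/n := by
    field_simp [hkj]
    linarith
  have he : (0:ℝ) < Real.exp 1 / 2 := by positivity
  have hbase : (0:ℝ) < Real.exp 1 * (n:ℝ)^2 / (2*k) := by positivity
  rw [kappa, ht]
  have htpos : (0:ℝ) < (k:ℝ)/n := by positivity
  have h1 : ((k:ℝ)/n) ^ (-((k:ℝ)/n)) = (((k:ℝ)/n)⁻¹) ^ ((k:ℝ)/n) := by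
    rw [Real.rpow_neg htpos.le, Real.inv_rpow htpos.le]
  rw [h1, ← Real.mul_rpow (by positivity) (by positivity),
      ← Real.mul_rpow (by positivity) (by positivity)]
  have h2 : (n:ℝ) * (Real.exp 1 / 2 * ((k:ℝ)/n)⁻¹) = Real.exp 1 * (n:ℝ)^2 / (2*k) := by
    field_simp
  rw [h2, ← Real.rpow_natCast ((Real.exp 1 * (n:ℝ)^2 / (2*k)) ^ ((k:ℝ)/n)) n,
      ← Real.rpow_mul hbase.le, div_mul_cancel₀ _ hn0.ne', Real.rpow_natCast]
open Nat Finset in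
lemma fact_le_stirling (k : ℕ) (hk : 1 ≤ k) :
    (k ! : ℝ) ≤ Real.exp 1 * Real.sqrt k * ((k:ℝ)/Real.exp 1)^k := by
  obtain ⟨m, rfl⟩ : ∃ m, k = m + 1 := ⟨k - 1, by omega⟩
  have h := Stirling.stirlingSeq'_antitone (Nat.zero_le m)
  simp only [Function.comp] at h
  rw [Stirling.stirlingSeq_one] at h
  rw [Stirling.stirlingSeq] at h
  set k := m + 1 with hkdef
  have hk0 : (0:ℝ) < k := by positivity
  have hd : (0:ℝ) < Real.sqrt (2*(k:ℝ)) * ((k:ℝ)/Real.exp 1)^k := by positivity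
  rw [div_le_div_iff₀ hd (by positivity : (0:ℝ) < Real.sqrt 2)] at h
  have hs : Real.sqrt (2*(k:ℝ)) = Real.sqrt 2 * Real.sqrt k := Real.sqrt_mul (by norm_num) _
  have h2 : (0:ℝ) < Real.sqrt 2 := by positivity
  rw [hs] at h
  nlinarith [h, Real.sq_sqrt (show (0:ℝ) ≤ 2 by norm_num), Real.sqrt_nonneg (k:ℝ),
    pow_pos (show (0:ℝ) < (k:ℝ)/Real.exp 1 by positivity) k, Real.sqrt_nonneg (2:ℝ)]

open Nat Finset in
lemma pow_le_fact_mul_exp (k : ℕ) : ((k:ℝ))^k ≤ (k ! : ℝ) * Real.exp k := by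
  have h := Real.sum_le_exp_of_nonneg (x := (k:ℝ)) (by positivity) (k+1)
  have h1 : ((k:ℝ))^k / (k ! : ℝ) ≤ Real.exp k := by
    refine le_trans ?_ h
    exact Finset.single_le_sum (f := fun i => (k:ℝ)^i / (i ! : ℝ))
      (fun i _ => by positivity) (Finset.self_mem_range_succ k)
  have hf : (0:ℝ) < (k ! : ℝ) := by exact_mod_cast k.factorial_pos
  calc ((k:ℝ))^k = ((k:ℝ))^k / (k ! : ℝ) * (k ! : ℝ) := by field_simp
    _ ≤ Real.exp k * (k ! : ℝ) := mul_le_mul_of_nonneg_right h1 hf.le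
    _ = (k ! : ℝ) * Real.exp k := mul_comm _ _

open Nat Finset in
lemma desc_ge (N k : ℕ) (hk : 1 ≤ k) (hkN : k ≤ N)
    (hsum : (k:ℝ) * ((k:ℝ)-1) / 2 ≤ (N:ℝ) - ((k:ℝ)-1)) :
    (N:ℝ)^k * Real.exp (-1) ≤ (N.descFactorial k : ℝ) := by
  have hN0 : (0:ℝ) < N := by exact_mod_cast Nat.lt_of_lt_of_le (by omega) hkN
  have hkR : (k:ℝ) ≤ (N:ℝ) := by exact_mod_cast hkN
  have hk1 : (1:ℝ) ≤ (k:ℝ) := by exact_mod_cast hk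
  have hc : (0:ℝ) < (N:ℝ) - ((k:ℝ)-1) := by linarith
  have hcast : (N.descFactorial k : ℝ) = ∏ i ∈ Finset.range k, ((N:ℝ) - i) := by
    rw [Nat.descFactorial_eq_prod_range, Nat.cast_prod]
    refine Finset.prod_congr rfl fun i hi => ?_
    have : i ≤ N := le_trans (le_of_lt (Finset.mem_range.mp hi)) hkN
    push_cast [Nat.cast_sub this]; ring
  have hib : ∀ i ∈ Finset.range k, (i:ℝ) ≤ (k:ℝ) - 1 := by
    intro i hi
    have : (i:ℕ) ≤ k - 1 := by have := Finset.mem_range.mp hi; omega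
    have h2 : (i:ℝ) ≤ ((k-1:ℕ):ℝ) := by exact_mod_cast this
    rwa [Nat.cast_sub hk, Nat.cast_one] at h2
  have hpos : ∀ i ∈ Finset.range k, (0:ℝ) < (N:ℝ) - i := by
    intro i hi
    have := hib i hi
    linarith
  have key : ∀ i ∈ Finset.range k,
      (N:ℝ) * Real.exp (-((i:ℝ) / ((N:ℝ) - i))) ≤ (N:ℝ) - i := by
    intro i hi
    have hNi := hpos i hi
    have h1 : (i:ℝ) / ((N:ℝ) - i) + 1 ≤ Real.exp ((i:ℝ) / ((N:ℝ) - i)) :=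
      Real.add_one_le_exp _
    have h2 : Real.exp (-((i:ℝ) / ((N:ℝ) - i))) ≤ ((i:ℝ) / ((N:ℝ) - i) + 1)⁻¹ := by
      rw [Real.exp_neg]
      exact inv_anti₀ (by positivity) h1
    have h3 : ((i:ℝ) / ((N:ℝ) - i) + 1)⁻¹ = ((N:ℝ) - i) / N := by
      rw [div_add' _ _ _ hNi.ne', inv_div]
      congr 1
      ring
    calc (N:ℝ) * Real.exp (-((i:ℝ) / ((N:ℝ) - i)))
        ≤ (N:ℝ) * (((N:ℝ) - i) / N) := by
          rw [h3] at h2; exact mul_le_mul_of_nonneg_left h2 hN0.le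
      _ = (N:ℝ) - i := by field_simp
  have hprod : ∏ i ∈ Finset.range k, ((N:ℝ) * Real.exp (-((i:ℝ) / ((N:ℝ) - i))))
      ≤ ∏ i ∈ Finset.range k, ((N:ℝ) - i) :=
    Finset.prod_le_prod (fun i _ => by positivity) key
  have hprodeq : ∏ i ∈ Finset.range k, ((N:ℝ) * Real.exp (-((i:ℝ) / ((N:ℝ) - i))))
      = (N:ℝ)^k * Real.exp (-(∑ i ∈ Finset.range k, (i:ℝ) / ((N:ℝ) - i))) := by
    rw [Finset.prod_mul_distrib, Finset.prod_const, ← Real.exp_sum, Finset.card_range,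
      ← Finset.sum_neg_distrib]
  have hgauss : (∑ i ∈ Finset.range k, (i:ℝ)) = (k:ℝ)*((k:ℝ)-1)/2 := by
    have h := Finset.sum_range_id_mul_two k
    have h2 : ((∑ i ∈ Finset.range k, i) * 2 : ℕ) = ((k * (k-1) : ℕ) : ℝ) := by
      exact_mod_cast congrArg (Nat.cast : ℕ → ℝ) h
    push_cast [Nat.cast_sub hk] at h2
    linarith
  have hsumle : (∑ i ∈ Finset.range k, (i:ℝ) / ((N:ℝ) - i)) ≤ 1 := by
    have step : (∑ i ∈ Finset.range k, (i:ℝ) / ((N:ℝ) - i))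
        ≤ ∑ i ∈ Finset.range k, (i:ℝ) / ((N:ℝ) - ((k:ℝ)-1)) := by
      refine Finset.sum_le_sum fun i hi => ?_
      have h1 := hib i hi
      have h2 := hpos i hi
      gcongr
    refine le_trans step ?_
    rw [← Finset.sum_div, hgauss, div_le_one hc]
    exact hsum
  calc (N:ℝ)^k * Real.exp (-1)
      ≤ (N:ℝ)^k * Real.exp (-(∑ i ∈ Finset.range k, (i:ℝ) / ((N:ℝ) - i))) := by
        refine mul_le_mul_of_nonneg_left (Real.exp_le_exp.mpr (by linarith)) (by positivity)
    _ ≤ (N.descFactorial k : ℝ) := by rw [← hprodeq, hcast]; exact hprod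

set_option maxHeartbeats 1000000 in
theorem stmt_12 (n j : ℕ) (hn : 3 ≤ n) (hj1 : 1 ≤ j) (hj2 : j ≤ n - 2) :
    Real.exp (-2) / (2 * Real.sqrt ((n : ℝ) * ((n : ℝ) - 1))) *
        ((n : ℝ) ^ (1 - (j : ℝ) / n) * kappa ((j : ℝ) / n)) ^ n ≤
      ((Nat.choose n 2).choose (n - j) : ℝ) ∧
    ((Nat.choose n 2).choose (n - j) : ℝ) ≤
      ((n : ℝ) ^ (1 - (j : ℝ) / n) * kappa ((j : ℝ) / n)) ^ n := by
  set k := n - j with hkdef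
  have hk2 : 2 ≤ k := by omega
  have hjn : j + k = n := by omega
  have hkcast : (k:ℝ) = (n:ℝ) - j := by
    have h : ((j + k : ℕ) : ℝ) = (n:ℝ) := by rw [hjn]
    push_cast at h; linarith
  have hnR : (3:ℝ) ≤ (n:ℝ) := by exact_mod_cast hn
  have hkR1 : (2:ℝ) ≤ (k:ℝ) := by exact_mod_cast hk2
  have hkR2 : (k:ℝ) ≤ (n:ℝ) - 1 := by
    have h : ((k + 1 : ℕ) : ℝ) ≤ (n:ℝ) := by exact_mod_cast (by omega : k + 1 ≤ n)
    push_cast at h; linarith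
  rw [kappa_pow_eq n k j (by omega) (by omega) hkcast]
  set N := n.choose 2 with hNdef
  have hNcast : (N:ℝ) = (n:ℝ) * ((n:ℝ)-1) / 2 := by
    rw [hNdef, Nat.cast_choose_two]
  have hNR : (k:ℝ) ≤ (N:ℝ) := by rw [hNcast]; nlinarith
  have hkN : k ≤ N := by exact_mod_cast hNR
  have hN0 : (0:ℝ) < (N:ℝ) := by rw [hNcast]; nlinarith
  have hk0R : (0:ℝ) < (k:ℝ) := by linarith
  set a := Real.exp 1 * (n:ℝ)^2 / (2*(k:ℝ)) with hadef
  have ha0 : (0:ℝ) < a := by positivity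
  have hdesc : (N.descFactorial k : ℝ) = (Nat.factorial k : ℝ) * (N.choose k : ℝ) := by
    exact_mod_cast congrArg (Nat.cast : ℕ → ℝ) (Nat.descFactorial_eq_factorial_mul_choose N k)
  have hfp : (0:ℝ) < (Nat.factorial k : ℝ) := by exact_mod_cast Nat.factorial_pos k
  constructor
  · -- lower bound
    have hD := desc_ge N k (by omega) hkN (by rw [hNcast]; nlinarith)
    have hF := fact_le_stirling k (by omega)
    set F := Real.exp 1 * Real.sqrt k * ((k:ℝ)/Real.exp 1)^k with hFdef
    have hF0 : (0:ℝ) < F := by positivity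
    set S := 2 * Real.sqrt ((n:ℝ) * ((n:ℝ)-1)) with hSdef
    have hnn1 : (0:ℝ) < (n:ℝ) * ((n:ℝ)-1) := by nlinarith
    have hS0 : (0:ℝ) < S := by
      rw [hSdef]; positivity
    have hchoose_ge : (N:ℝ)^k * Real.exp (-1) / F ≤ (N.choose k : ℝ) := by
      rw [div_le_iff₀ hF0]
      calc (N:ℝ)^k * Real.exp (-1) ≤ (N.descFactorial k : ℝ) := hD
        _ = (Nat.factorial k : ℝ) * (N.choose k : ℝ) := hdesc
        _ ≤ F * (N.choose k : ℝ) :=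
            mul_le_mul_of_nonneg_right hF (Nat.cast_nonneg _)
        _ = (N.choose k : ℝ) * F := mul_comm _ _
    refine le_trans ?_ hchoose_ge
    rw [div_mul_eq_mul_div, div_le_div_iff₀ hS0 hF0]
    have hAF : a^k * ((k:ℝ)/Real.exp 1)^k = ((n:ℝ)^2/2)^k := by
      rw [← mul_pow]
      congr 1
      rw [hadef]
      field_simp
    have hn1 : (0:ℝ) < (n:ℝ) - 1 := by linarith
    have G1 : ((n:ℝ)^2/2)^k ≤ Real.exp 1 * (N:ℝ)^k := by
      have hq : ((n:ℝ)^2/2) = ((n:ℝ)/((n:ℝ)-1)) * (N:ℝ) := by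
        rw [hNcast]; field_simp
      rw [hq, mul_pow]
      refine mul_le_mul_of_nonneg_right ?_ (by positivity)
      have h1 : (n:ℝ)/((n:ℝ)-1) ≤ Real.exp (1/((n:ℝ)-1)) := by
        have h2 := Real.add_one_le_exp (1/((n:ℝ)-1))
        have hrw : (n:ℝ)/((n:ℝ)-1) = 1/((n:ℝ)-1) + 1 := by field_simp; ring
        linarith [hrw ▸ h2]
      calc ((n:ℝ)/((n:ℝ)-1))^k ≤ (Real.exp (1/((n:ℝ)-1)))^k :=
            pow_le_pow_left₀ (by positivity) h1 k
        _ = Real.exp ((k:ℕ) * (1/((n:ℝ)-1))) := by rw [Real.exp_nat_mul]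
        _ ≤ Real.exp 1 := by
            refine Real.exp_le_exp.mpr ?_
            rw [mul_one_div, div_le_one hn1]
            linarith
    have G2 : Real.exp 1 * Real.sqrt k ≤ S := by
      have he3 : Real.exp 1 ≤ 3 := by
        have := Real.exp_one_lt_d9; linarith
      calc Real.exp 1 * Real.sqrt k ≤ 3 * Real.sqrt k :=
            mul_le_mul_of_nonneg_right he3 (Real.sqrt_nonneg _)
        _ = Real.sqrt (9 * (k:ℝ)) := by
            rw [show (9:ℝ) * (k:ℝ) = 3^2 * (k:ℝ) by ring, Real.sqrt_mul (by positivity) _,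
              Real.sqrt_sq (by norm_num : (0:ℝ) ≤ 3)]
        _ ≤ Real.sqrt (4 * ((n:ℝ) * ((n:ℝ)-1))) := Real.sqrt_le_sqrt (by nlinarith)
        _ = S := by
            rw [hSdef, show (4:ℝ) * ((n:ℝ) * ((n:ℝ)-1)) = 2^2 * ((n:ℝ) * ((n:ℝ)-1)) by ring,
              Real.sqrt_mul (by positivity) _, Real.sqrt_sq (by norm_num : (0:ℝ) ≤ 2)]
    have hexp : Real.exp (-2) * Real.exp 1 = Real.exp (-1) := by
      rw [← Real.exp_add]; norm_num
    calc Real.exp (-2) * a^k * F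
        = (Real.exp (-2) * Real.exp 1) * Real.sqrt k * (a^k * ((k:ℝ)/Real.exp 1)^k) := by
          rw [hFdef]; ring
      _ = Real.exp (-1) * Real.sqrt k * ((n:ℝ)^2/2)^k := by rw [hexp, hAF]
      _ ≤ Real.exp (-1) * Real.sqrt k * (Real.exp 1 * (N:ℝ)^k) :=
          mul_le_mul_of_nonneg_left G1 (by positivity)
      _ = Real.exp (-1) * (N:ℝ)^k * (Real.exp 1 * Real.sqrt k) := by ring
      _ ≤ Real.exp (-1) * (N:ℝ)^k * S := mul_le_mul_of_nonneg_left G2 (by positivity)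
      _ = (N:ℝ)^k * Real.exp (-1) * S := by ring
  · -- upper bound
    have h1 : (N.choose k : ℝ) * (Nat.factorial k : ℝ) ≤ (N:ℝ)^k := by
      have hc : (N.descFactorial k : ℝ) ≤ (N:ℝ)^k := by
        exact_mod_cast Nat.descFactorial_le_pow N k
      rw [hdesc] at hc
      linarith [hc, mul_comm ((Nat.factorial k : ℝ)) ((N.choose k : ℝ))]
    have h2 := pow_le_fact_mul_exp k
    have hak : a^k = Real.exp k * ((n:ℝ)^2/2)^k / (k:ℝ)^k := by
      rw [hadef, ← Real.exp_one_pow,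
        show Real.exp 1 * (n:ℝ)^2/(2*(k:ℝ)) = Real.exp 1 * ((n:ℝ)^2/2) / (k:ℝ) by ring,
        div_pow, mul_pow]
    rw [hak, le_div_iff₀ (by positivity)]
    calc (N.choose k : ℝ) * (k:ℝ)^k
        ≤ (N.choose k : ℝ) * ((Nat.factorial k : ℝ) * Real.exp k) :=
          mul_le_mul_of_nonneg_left h2 (Nat.cast_nonneg _)
      _ = (N.choose k : ℝ) * (Nat.factorial k : ℝ) * Real.exp k := by ring
      _ ≤ (N:ℝ)^k * Real.exp k :=
          mul_le_mul_of_nonneg_right h1 (Real.exp_nonneg _)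
      _ ≤ ((n:ℝ)^2/2)^k * Real.exp k := by
          refine mul_le_mul_of_nonneg_right (pow_le_pow_left₀ hN0.le ?_ k) (Real.exp_nonneg _)
          rw [hNcast]; nlinarith
      _ = Real.exp k * ((n:ℝ)^2/2)^k := mul_comm _ _
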